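/- In ℂ[x,y,z,t], the intersection of the ideal generated by x² and z²+t³+x with the subring ℂ[x,z,t] inside the quotient ring ℂ[x,y,z,t]/(x²y+z²+x+t³) equals the ideal of ℂ[x,z,t] generated by x² and z²+t³+x. Equivalently: if f ∈ ℂ[x,z,t] and f lies in the ideal x²·ℂ[X] of the coordinate ring ℂ[X] = ℂ[x,y,z,t]/(x²y+z²+x+t³), then f ∈ (x², z²+t³+x) ⊆ ℂ[x,z,t]. -/
import Mathlib


open MvPolynomial

/-- P = x²y + z² + x + t³ -/
noncomputable def KRP : MvPolynomial (Fin 4) ℂ :=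
  X 0 ^ 2 * X 1 + X 2 ^ 2 + X 0 + X 3 ^ 3

/-- A polynomial in ℂ[x,y,z,t] "lies in ℂ[x,z,t]" iff the variable y (index 1)
does not occur in it. -/
def NoY (f : MvPolynomial (Fin 4) ℂ) : Prop := ∀ m ∈ f.support, m 1 = 0

noncomputable def killY : Fin 4 → MvPolynomial (Fin 4) ℂ :=
  fun i => if i = 1 then 0 else X i

lemma noY_C (a : ℂ) : NoY (C a : MvPolynomial (Fin 4) ℂ) := by
  intro m hm
  rw [mem_support_iff, coeff_C] at hm
  by_cases h : (0 : Fin 4 →₀ ℕ) = m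
  · rw [← h]; rfl
  · simp [h] at hm

lemma noY_add {p q : MvPolynomial (Fin 4) ℂ} (hp : NoY p) (hq : NoY q) :
    NoY (p + q) := by
  intro m hm
  rcases Finset.mem_union.mp (MvPolynomial.support_add hm) with h | h
  · exact hp m h
  · exact hq m h

lemma noY_mul {p q : MvPolynomial (Fin 4) ℂ} (hp : NoY p) (hq : NoY q) :
    NoY (p * q) := by
  intro m hm
  rcases Finset.mem_add.mp (MvPolynomial.support_mul p q hm) with ⟨m1, h1, m2, h2, rfl⟩
  simp [Finsupp.add_apply, hp m1 h1, hq m2 h2]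

lemma noY_killY (g : MvPolynomial (Fin 4) ℂ) : NoY (aeval killY g) := by
  induction g using MvPolynomial.induction_on with
  | C a => rw [aeval_C]; exact noY_C a
  | add p q hp hq => rw [map_add]; exact noY_add hp hq
  | mul_X p n hp =>
    rw [map_mul, aeval_X]
    refine noY_mul hp ?_
    unfold killY
    by_cases hn : n = 1
    · simp [hn]; intro m hm; simp at hm
    · simp only [hn, if_false]
      intro m hm
      rw [MvPolynomial.support_X, Finset.mem_singleton] at hm
      subst hm
      simp [Finsupp.single_apply, hn]

lemma killY_fix {f : MvPolynomial (Fin 4) ℂ} (hf : NoY f) : aeval killY f = f := by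
  conv_lhs => rw [f.as_sum]
  rw [map_sum]
  conv_rhs => rw [f.as_sum]
  refine Finset.sum_congr rfl fun m hm => ?_
  rw [aeval_monomial, monomial_eq]
  congr 1
  refine Finsupp.prod_congr fun i hi => ?_
  have hi1 : i ≠ 1 := by
    intro h; subst h
    exact (Finsupp.mem_support_iff.mp hi) (hf m hm)
  simp [killY, hi1]

/-- If f ∈ ℂ[x,z,t] and the image of f in ℂ[X] = ℂ[x,y,z,t]/(P) lies in the ideal
generated by x², then f lies in the ideal (x², z²+t³+x) of ℂ[x,z,t]. -/
theorem stmt7 (f : MvPolynomial (Fin 4) ℂ) (hf : NoY f)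
    (h : Ideal.Quotient.mk (Ideal.span {KRP}) f ∈
      Ideal.span {Ideal.Quotient.mk (Ideal.span {KRP}) (X 0 ^ 2)}) :
    ∃ a b : MvPolynomial (Fin 4) ℂ, NoY a ∧ NoY b ∧
      f = a * X 0 ^ 2 + b * (X 2 ^ 2 + X 3 ^ 3 + X 0) := by
  obtain ⟨c, hc⟩ := Ideal.mem_span_singleton'.mp h
  obtain ⟨A, rfl⟩ := Ideal.Quotient.mk_surjective c
  rw [← map_mul, Ideal.Quotient.mk_eq_mk_iff_sub_mem] at hc
  obtain ⟨B, hB⟩ := Ideal.mem_span_singleton.mp hc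
  have hfeq : f = A * X 0 ^ 2 + KRP * (-B) := by
    linear_combination -hB
  refine ⟨aeval killY A, aeval killY (-B), noY_killY A, noY_killY (-B), ?_⟩
  have := congrArg (aeval killY) hfeq
  rw [killY_fix hf, map_add, map_mul, map_mul] at this
  rw [this]
  have h0 : aeval killY (X 0 ^ 2 : MvPolynomial (Fin 4) ℂ) = X 0 ^ 2 := by
    simp [killY]
  have hP : aeval killY KRP = X 2 ^ 2 + X 3 ^ 3 + X 0 := by
    simp [KRP, killY]
    ring
  rw [h0, hP]
  ring
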